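/- The polynomial w = xyz + x′y′z′ + e′zy′ + ez′y + z′e′x + zex′ + yx′e′ + y′xe ∈ R equals Σ_{g∈Q₈} g·(xyz), is fixed by the action of every element of Q₈, and satisfies π(w) = 0. -/

import Mathlib

set_option synthInstance.maxHeartbeats 1000000
set_option maxHeartbeats 1000000

open MvPolynomial QuaternionGroup

/-- The quaternion group `Q₈ = {1, −1, i, −i, j, −j, k, −k}` of order `8`.
Concretely, `1 = a 0`, `−1 = a 2`, `i = a 1`, `−i = a 3`, `j = xa 0`, `−j = xa 2`,
`k = xa 3`, `−k = xa 1`. -/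
abbrev Q8 : Type := QuaternionGroup 2

/-- The polynomial ring `R = ℤ[u_g : g ∈ Q₈]`. -/
abbrev R8 : Type := MvPolynomial Q8 ℤ

/-- The action of `g ∈ Q₈` on `R` by the `ℤ`-algebra automorphism permuting the
variables by left translation: `g • u_h = u_{g h}`. -/
noncomputable def act (g : Q8) : R8 →ₐ[ℤ] R8 :=
  rename (fun h : Q8 => g * h)

noncomputable def eV : R8 := X (a 0)
noncomputable def e'V : R8 := X (a 2)
noncomputable def xV : R8 := X (a 1)
noncomputable def x'V : R8 := X (a 3)
noncomputable def yV : R8 := X (xa 0)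
noncomputable def y'V : R8 := X (xa 2)
noncomputable def zV : R8 := X (xa 3)
noncomputable def z'V : R8 := X (xa 1)

/-- The polynomial `w = xyz + x′y′z′ + e′zy′ + ez′y + z′e′x + zex′ + yx′e′ + y′xe`. -/
noncomputable def w : R8 :=
  xV * yV * zV + x'V * y'V * z'V + e'V * zV * y'V + eV * z'V * yV
    + z'V * e'V * xV + zV * eV * x'V + yV * x'V * e'V + y'V * xV * eV


/-- The `ℤ`-algebra homomorphism `π : R → ℤ[X₀, X₁, X₂, X₃]` with `π(e) = X₀`,
`π(e′) = −X₀`, `π(x) = X₁`, `π(x′) = −X₁`, `π(y) = X₂`, `π(y′) = −X₂`, `π(z) = X₃`,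
`π(z′) = −X₃`. -/
noncomputable def piQ : R8 →ₐ[ℤ] MvPolynomial (Fin 4) ℤ :=
  aeval (fun g : Q8 =>
    match g with
    | .a i => if i = 0 then (X 0 : MvPolynomial (Fin 4) ℤ)
        else if i = 2 then - X 0 else if i = 1 then X 1 else - X 1
    | .xa i => if i = 0 then (X 2 : MvPolynomial (Fin 4) ℤ)
        else if i = 2 then - X 2 else if i = 3 then X 3 else - X 3)

/-- The polynomial
`w = xyz + x′y′z′ + e′zy′ + ez′y + z′e′x + zex′ + yx′e′ + y′xe ∈ R` equals
`Σ_{g ∈ Q₈} g·(xyz)`, is fixed by the action of every element of `Q₈`, and satisfies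
`π(w) = 0`. -/
lemma q8m0 : (a 0 : Q8) * a 0 = a 0 := by decide
lemma q8m1 : (a 0 : Q8) * a 1 = a 1 := by decide
lemma q8m2 : (a 0 : Q8) * a 2 = a 2 := by decide
lemma q8m3 : (a 0 : Q8) * a 3 = a 3 := by decide
lemma q8m4 : (a 0 : Q8) * xa 0 = xa 0 := by decide
lemma q8m5 : (a 0 : Q8) * xa 1 = xa 1 := by decide
lemma q8m6 : (a 0 : Q8) * xa 2 = xa 2 := by decide
lemma q8m7 : (a 0 : Q8) * xa 3 = xa 3 := by decide
lemma q8m8 : (a 1 : Q8) * a 0 = a 1 := by decide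
lemma q8m9 : (a 1 : Q8) * a 1 = a 2 := by decide
lemma q8m10 : (a 1 : Q8) * a 2 = a 3 := by decide
lemma q8m11 : (a 1 : Q8) * a 3 = a 0 := by decide
lemma q8m12 : (a 1 : Q8) * xa 0 = xa 3 := by decide
lemma q8m13 : (a 1 : Q8) * xa 1 = xa 0 := by decide
lemma q8m14 : (a 1 : Q8) * xa 2 = xa 1 := by decide
lemma q8m15 : (a 1 : Q8) * xa 3 = xa 2 := by decide
lemma q8m16 : (a 2 : Q8) * a 0 = a 2 := by decide
lemma q8m17 : (a 2 : Q8) * a 1 = a 3 := by decide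
lemma q8m18 : (a 2 : Q8) * a 2 = a 0 := by decide
lemma q8m19 : (a 2 : Q8) * a 3 = a 1 := by decide
lemma q8m20 : (a 2 : Q8) * xa 0 = xa 2 := by decide
lemma q8m21 : (a 2 : Q8) * xa 1 = xa 3 := by decide
lemma q8m22 : (a 2 : Q8) * xa 2 = xa 0 := by decide
lemma q8m23 : (a 2 : Q8) * xa 3 = xa 1 := by decide
lemma q8m24 : (a 3 : Q8) * a 0 = a 3 := by decide
lemma q8m25 : (a 3 : Q8) * a 1 = a 0 := by decide
lemma q8m26 : (a 3 : Q8) * a 2 = a 1 := by decide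
lemma q8m27 : (a 3 : Q8) * a 3 = a 2 := by decide
lemma q8m28 : (a 3 : Q8) * xa 0 = xa 1 := by decide
lemma q8m29 : (a 3 : Q8) * xa 1 = xa 2 := by decide
lemma q8m30 : (a 3 : Q8) * xa 2 = xa 3 := by decide
lemma q8m31 : (a 3 : Q8) * xa 3 = xa 0 := by decide
lemma q8m32 : (xa 0 : Q8) * a 0 = xa 0 := by decide
lemma q8m33 : (xa 0 : Q8) * a 1 = xa 1 := by decide
lemma q8m34 : (xa 0 : Q8) * a 2 = xa 2 := by decide
lemma q8m35 : (xa 0 : Q8) * a 3 = xa 3 := by decide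
lemma q8m36 : (xa 0 : Q8) * xa 0 = a 2 := by decide
lemma q8m37 : (xa 0 : Q8) * xa 1 = a 3 := by decide
lemma q8m38 : (xa 0 : Q8) * xa 2 = a 0 := by decide
lemma q8m39 : (xa 0 : Q8) * xa 3 = a 1 := by decide
lemma q8m40 : (xa 1 : Q8) * a 0 = xa 1 := by decide
lemma q8m41 : (xa 1 : Q8) * a 1 = xa 2 := by decide
lemma q8m42 : (xa 1 : Q8) * a 2 = xa 3 := by decide
lemma q8m43 : (xa 1 : Q8) * a 3 = xa 0 := by decide
lemma q8m44 : (xa 1 : Q8) * xa 0 = a 1 := by decide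
lemma q8m45 : (xa 1 : Q8) * xa 1 = a 2 := by decide
lemma q8m46 : (xa 1 : Q8) * xa 2 = a 3 := by decide
lemma q8m47 : (xa 1 : Q8) * xa 3 = a 0 := by decide
lemma q8m48 : (xa 2 : Q8) * a 0 = xa 2 := by decide
lemma q8m49 : (xa 2 : Q8) * a 1 = xa 3 := by decide
lemma q8m50 : (xa 2 : Q8) * a 2 = xa 0 := by decide
lemma q8m51 : (xa 2 : Q8) * a 3 = xa 1 := by decide
lemma q8m52 : (xa 2 : Q8) * xa 0 = a 0 := by decide
lemma q8m53 : (xa 2 : Q8) * xa 1 = a 1 := by decide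
lemma q8m54 : (xa 2 : Q8) * xa 2 = a 2 := by decide
lemma q8m55 : (xa 2 : Q8) * xa 3 = a 3 := by decide
lemma q8m56 : (xa 3 : Q8) * a 0 = xa 3 := by decide
lemma q8m57 : (xa 3 : Q8) * a 1 = xa 0 := by decide
lemma q8m58 : (xa 3 : Q8) * a 2 = xa 1 := by decide
lemma q8m59 : (xa 3 : Q8) * a 3 = xa 2 := by decide
lemma q8m60 : (xa 3 : Q8) * xa 0 = a 3 := by decide
lemma q8m61 : (xa 3 : Q8) * xa 1 = a 0 := by decide
lemma q8m62 : (xa 3 : Q8) * xa 2 = a 1 := by decide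
lemma q8m63 : (xa 3 : Q8) * xa 3 = a 2 := by decide


lemma univ_q8 : (Finset.univ : Finset Q8) = {a 0, a 1, a 2, a 3, xa 0, xa 1, xa 2, xa 3} := by decide


lemma q8_enum : ∀ g : Q8, g = a 0 ∨ g = a 1 ∨ g = a 2 ∨ g = a 3 ∨
    g = xa 0 ∨ g = xa 1 ∨ g = xa 2 ∨ g = xa 3 := by decide

lemma pi_e : piQ eV = X 0 := by simp (config := { decide := true }) [piQ, eV, -a_zero]
lemma pi_e' : piQ e'V = - X 0 := by simp (config := { decide := true }) [piQ, e'V]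
lemma pi_x : piQ xV = X 1 := by simp (config := { decide := true }) [piQ, xV]
lemma pi_x' : piQ x'V = - X 1 := by simp (config := { decide := true }) [piQ, x'V]
lemma pi_y : piQ yV = X 2 := by simp (config := { decide := true }) [piQ, yV]
lemma pi_y' : piQ y'V = - X 2 := by simp (config := { decide := true }) [piQ, y'V]
lemma pi_z : piQ zV = X 3 := by simp (config := { decide := true }) [piQ, zV]
lemma pi_z' : piQ z'V = - X 3 := by simp (config := { decide := true }) [piQ, z'V]

theorem stmt7 :
    w = ∑ g : Q8, act g (xV * yV * zV) ∧
    (∀ g : Q8, act g w = w) ∧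
    piQ w = 0 := by
  have hx : ∀ g h : Q8, act g (X h) = X (g * h) := fun g h => rename_X _ _
  refine ⟨?_, ?_, ?_⟩
  · rw [univ_q8]
    rw [Finset.sum_insert (by decide), Finset.sum_insert (by decide),
      Finset.sum_insert (by decide), Finset.sum_insert (by decide),
      Finset.sum_insert (by decide), Finset.sum_insert (by decide),
      Finset.sum_insert (by decide), Finset.sum_singleton]
    simp only [w, eV, e'V, xV, x'V, yV, y'V, zV, z'V, map_mul, hx, q8m0, q8m1, q8m2, q8m3, q8m4, q8m5, q8m6, q8m7, q8m8, q8m9, q8m10, q8m11, q8m12, q8m13, q8m14, q8m15, q8m16, q8m17, q8m18, q8m19, q8m20, q8m21, q8m22, q8m23, q8m24, q8m25, q8m26, q8m27, q8m28, q8m29, q8m30, q8m31, q8m32, q8m33, q8m34, q8m35, q8m36, q8m37, q8m38, q8m39, q8m40, q8m41, q8m42, q8m43, q8m44, q8m45, q8m46, q8m47, q8m48, q8m49, q8m50, q8m51, q8m52, q8m53, q8m54, q8m55, q8m56, q8m57, q8m58, q8m59, q8m60, q8m61, q8m62, q8m63]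
    ring
  · intro g
    rcases q8_enum g with h|h|h|h|h|h|h|h <;> subst h <;>
      simp only [w, eV, e'V, xV, x'V, yV, y'V, zV, z'V, map_add, map_mul, hx, q8m0, q8m1, q8m2, q8m3, q8m4, q8m5, q8m6, q8m7, q8m8, q8m9, q8m10, q8m11, q8m12, q8m13, q8m14, q8m15, q8m16, q8m17, q8m18, q8m19, q8m20, q8m21, q8m22, q8m23, q8m24, q8m25, q8m26, q8m27, q8m28, q8m29, q8m30, q8m31, q8m32, q8m33, q8m34, q8m35, q8m36, q8m37, q8m38, q8m39, q8m40, q8m41, q8m42, q8m43, q8m44, q8m45, q8m46, q8m47, q8m48, q8m49, q8m50, q8m51, q8m52, q8m53, q8m54, q8m55, q8m56, q8m57, q8m58, q8m59, q8m60, q8m61, q8m62, q8m63] <;>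
      ring
  · simp only [w, map_add, map_mul, pi_e, pi_e', pi_x, pi_x', pi_y, pi_y', pi_z, pi_z']
    ring
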